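/- The set 𝔇 is a nonempty closed convex subset of Ker A^D containing 0, the set 𝔇° is a convex subset of Ker A^D that is open in Ker A^D and contains 0, the map η is a convex function on 𝔇, η is continuous on 𝔇, and η is twice continuously differentiable on 𝔇°. -/

import Mathlib

open Filter Topology

noncomputable section

/-- `g_i(w) = (1/2) wᵀ π_i w + (A^C w)_i`. -/
def gfun {m n : ℕ} (π : Fin m → Matrix (Fin n) (Fin n) ℝ)
    (AC : Matrix (Fin m) (Fin n) ℝ) (w : Fin n → ℝ) (i : Fin m) : ℝ :=
  (1 / 2) * (∑ j, ∑ k, w j * π i j k * w k) + ∑ j, AC i j * w j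

/-- `f_i(v,w) = (1/2) v_i² 1_{i∈I} + Σ_{k ≤ i} A^V_{ik} v_k + g_i(w)`. -/
def fRic {m n : ℕ} (I : Finset (Fin m)) (AV : Matrix (Fin m) (Fin m) ℝ)
    (π : Fin m → Matrix (Fin n) (Fin n) ℝ) (AC : Matrix (Fin m) (Fin n) ℝ)
    (v : Fin m → ℝ) (w : Fin n → ℝ) (i : Fin m) : ℝ :=
  (1 / 2) * (v i) ^ 2 * (if i ∈ I then 1 else 0)
    + (∑ k ∈ Finset.univ.filter (fun k => k ≤ i), AV i k * v k)
    + gfun π AC w i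

/-- `E(w) = {v : f_i(v,w) ≤ 0 ∀ i}`. -/
def Eset {m n : ℕ} (I : Finset (Fin m)) (AV : Matrix (Fin m) (Fin m) ℝ)
    (π : Fin m → Matrix (Fin n) (Fin n) ℝ) (AC : Matrix (Fin m) (Fin n) ℝ)
    (w : Fin n → ℝ) : Set (Fin m → ℝ) :=
  {v | ∀ i, fRic I AV π AC v w i ≤ 0}

/-- `E°(w) = {v : f_i(v,w) < 0 ∀ i}`. -/
def EsetO {m n : ℕ} (I : Finset (Fin m)) (AV : Matrix (Fin m) (Fin m) ℝ)
    (π : Fin m → Matrix (Fin n) (Fin n) ℝ) (AC : Matrix (Fin m) (Fin n) ℝ)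
    (w : Fin n → ℝ) : Set (Fin m → ℝ) :=
  {v | ∀ i, fRic I AV π AC v w i < 0}

/-- `𝔇 = {w ∈ Ker A^D : E(w) ≠ ∅}`. -/
def Dset {m n : ℕ} (I : Finset (Fin m)) (AV : Matrix (Fin m) (Fin m) ℝ)
    (π : Fin m → Matrix (Fin n) (Fin n) ℝ) (AC : Matrix (Fin m) (Fin n) ℝ)
    (AD : Matrix (Fin n) (Fin n) ℝ) : Set (Fin n → ℝ) :=
  {w | AD.mulVec w = 0 ∧ (Eset I AV π AC w).Nonempty}

/-- `𝔇° = {w ∈ Ker A^D : E°(w) ≠ ∅}`. -/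
def DsetO {m n : ℕ} (I : Finset (Fin m)) (AV : Matrix (Fin m) (Fin m) ℝ)
    (π : Fin m → Matrix (Fin n) (Fin n) ℝ) (AC : Matrix (Fin m) (Fin n) ℝ)
    (AD : Matrix (Fin n) (Fin n) ℝ) : Set (Fin n → ℝ) :=
  {w | AD.mulVec w = 0 ∧ (EsetO I AV π AC w).Nonempty}


-- strong induction on Fin
lemma finStrongInd {m : ℕ} (P : Fin m → Prop)
    (step : ∀ i : Fin m, (∀ k, k < i → P k) → P i) : ∀ i, P i := by
  have H : ∀ N : ℕ, ∀ i : Fin m, i.val < N → P i := by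
    intro N
    induction N with
    | zero => intro i hi; exact absurd hi (Nat.not_lt_zero _)
    | succ N ih =>
      intro i hi
      exact step i fun k hk => ih k (by have := (Fin.lt_def).1 hk; omega)
  exact fun i => H (i.val + 1) i (Nat.lt_succ_self _)

lemma sum_filter_le_eq {m : ℕ} (i : Fin m) (F : Fin m → ℝ) :
    (∑ k ∈ Finset.univ.filter (fun k => k ≤ i), F k)
      = F i + ∑ k ∈ Finset.univ.filter (fun k => k < i), F k := by
  have h : Finset.univ.filter (fun k : Fin m => k ≤ i)
      = insert i (Finset.univ.filter (fun k => k < i)) := by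
    ext k
    simp [Finset.mem_filter, Finset.mem_insert, le_iff_lt_or_eq, or_comm]
  rw [h, Finset.sum_insert (by simp)]

-- PSD gives nonneg quadratic form in sum form
lemma psd_sum_nonneg {n : ℕ} (P : Matrix (Fin n) (Fin n) ℝ) (hP : P.PosSemidef)
    (x : Fin n → ℝ) : 0 ≤ ∑ j, ∑ k, x j * P j k * x k := by
  have := hP.dotProduct_mulVec_nonneg x
  simpa [dotProduct, Matrix.mulVec, Finset.mul_sum, mul_assoc] using this

lemma quad_expand {n : ℕ} (P : Matrix (Fin n) (Fin n) ℝ) (x y : Fin n → ℝ) :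
    (∑ j, ∑ k, (x j + y j) * P j k * (x k + y k))
      = (∑ j, ∑ k, x j * P j k * x k) + (∑ j, ∑ k, x j * P j k * y k)
        + (∑ j, ∑ k, y j * P j k * x k) + (∑ j, ∑ k, y j * P j k * y k) := by
  simp only [← Finset.sum_add_distrib]
  exact Finset.sum_congr rfl fun j _ => Finset.sum_congr rfl fun k _ => by ring

lemma quad_smul {n : ℕ} (P : Matrix (Fin n) (Fin n) ℝ) (x y : Fin n → ℝ) (a b : ℝ) :
    (∑ j, ∑ k, (a * x j) * P j k * (b * y k))
      = a * b * ∑ j, ∑ k, x j * P j k * y k := by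
  simp only [Finset.mul_sum]
  exact Finset.sum_congr rfl fun j _ => Finset.sum_congr rfl fun k _ => by ring

lemma quad_convex {n : ℕ} (P : Matrix (Fin n) (Fin n) ℝ) (hP : P.PosSemidef)
    (w1 w2 : Fin n → ℝ) (a b : ℝ) (ha : 0 ≤ a) (hb : 0 ≤ b) (hab : a + b = 1) :
    (∑ j, ∑ k, (a * w1 j + b * w2 j) * P j k * (a * w1 k + b * w2 k))
      ≤ a * (∑ j, ∑ k, w1 j * P j k * w1 k) + b * (∑ j, ∑ k, w2 j * P j k * w2 k) := by
  have hexp := quad_expand P (fun j => a * w1 j) (fun j => b * w2 j)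
  have hsub : (∑ j, ∑ k, (w1 j + (-1) * w2 j) * P j k * (w1 k + (-1) * w2 k)) =
      (∑ j, ∑ k, w1 j * P j k * w1 k) + (∑ j, ∑ k, w1 j * P j k * ((-1) * w2 k))
        + (∑ j, ∑ k, ((-1) * w2 j) * P j k * w1 k)
        + (∑ j, ∑ k, ((-1) * w2 j) * P j k * ((-1) * w2 k)) :=
    quad_expand P w1 (fun j => (-1) * w2 j)
  have hnn := psd_sum_nonneg P hP (fun j => w1 j + (-1) * w2 j)
  rw [hsub] at hnn
  rw [hexp]
  rw [quad_smul P w1 w1 a a, quad_smul P w1 w2 a b, quad_smul P w2 w1 b a,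
    quad_smul P w2 w2 b b]
  have h12 : (∑ j, ∑ k, w1 j * P j k * ((-1) * w2 k))
      = (-1) * ∑ j, ∑ k, w1 j * P j k * w2 k := by
    have := quad_smul P w1 w2 1 (-1); simpa using this
  have h21 : (∑ j, ∑ k, ((-1) * w2 j) * P j k * w1 k)
      = (-1) * ∑ j, ∑ k, w2 j * P j k * w1 k := by
    have := quad_smul P w2 w1 (-1) 1; simpa using this
  have h22 : (∑ j, ∑ k, ((-1) * w2 j) * P j k * ((-1) * w2 k))
      = ∑ j, ∑ k, w2 j * P j k * w2 k := by
    have := quad_smul P w2 w2 (-1) (-1); simpa using this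
  rw [h12, h21, h22] at hnn
  set Q11 := ∑ j, ∑ k, w1 j * P j k * w1 k
  set Q12 := ∑ j, ∑ k, w1 j * P j k * w2 k
  set Q21 := ∑ j, ∑ k, w2 j * P j k * w1 k
  set Q22 := ∑ j, ∑ k, w2 j * P j k * w2 k
  have hb' : b = 1 - a := by linarith
  have key : a * Q11 + b * Q22 - (a * a * Q11 + a * b * Q12 + b * a * Q21 + b * b * Q22)
      = a * b * (Q11 + -1 * Q12 + -1 * Q21 + Q22) := by rw [hb']; ring
  have hnn' : 0 ≤ a * b * (Q11 + -1 * Q12 + -1 * Q21 + Q22) :=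
    mul_nonneg (mul_nonneg ha hb) hnn
  linarith [key, hnn']


section AuxEta

variable {m n : ℕ} {I : Finset (Fin m)} {AV : Matrix (Fin m) (Fin m) ℝ}
  {π : Fin m → Matrix (Fin n) (Fin n) ℝ} {AC : Matrix (Fin m) (Fin n) ℝ}
  {η : (Fin n → ℝ) → Fin m → ℝ}

/-- `c_i(w)` -/
def cfun (AV : Matrix (Fin m) (Fin m) ℝ) (π : Fin m → Matrix (Fin n) (Fin n) ℝ)
    (AC : Matrix (Fin m) (Fin n) ℝ) (η : (Fin n → ℝ) → Fin m → ℝ)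
    (w : Fin n → ℝ) (i : Fin m) : ℝ :=
  (∑ k ∈ Finset.univ.filter (fun k => k < i), AV i k * η w k) + gfun π AC w i

/-- discriminant -/
def dsc (AV : Matrix (Fin m) (Fin m) ℝ) (π : Fin m → Matrix (Fin n) (Fin n) ℝ)
    (AC : Matrix (Fin m) (Fin n) ℝ) (η : (Fin n → ℝ) → Fin m → ℝ)
    (w : Fin n → ℝ) (i : Fin m) : ℝ :=
  (AV i i) ^ 2 - 2 * cfun AV π AC η w i

/-- the recursion hypothesis -/
def etaRec (I : Finset (Fin m)) (AV : Matrix (Fin m) (Fin m) ℝ)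
    (π : Fin m → Matrix (Fin n) (Fin n) ℝ) (AC : Matrix (Fin m) (Fin n) ℝ)
    (η : (Fin n → ℝ) → Fin m → ℝ) : Prop :=
  ∀ (w : Fin n → ℝ) (i : Fin m), η w i =
    if i ∈ I then -AV i i - Real.sqrt (dsc AV π AC η w i)
    else -(AV i i)⁻¹ * cfun AV π AC η w i

lemma fRic_split (v w : _) (i : Fin m) :
    fRic I AV π AC v w i =
      (1 / 2) * (v i) ^ 2 * (if i ∈ I then 1 else 0) + AV i i * v i
        + ((∑ k ∈ Finset.univ.filter (fun k => k < i), AV i k * v k) + gfun π AC w i) := by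
  unfold fRic
  rw [sum_filter_le_eq i (fun k => AV i k * v k)]
  ring

lemma fRic_split_eta (w : Fin n → ℝ) (i : Fin m) :
    fRic I AV π AC (η w) w i =
      (1 / 2) * (η w i) ^ 2 * (if i ∈ I then 1 else 0) + AV i i * η w i
        + cfun AV π AC η w i := by
  rw [fRic_split]; rfl

lemma feta_eq (hAVdiag : ∀ i : Fin m, AV i i < 0) (hrec : etaRec I AV π AC η)
    (w : Fin n → ℝ) (i : Fin m) (hd : i ∈ I → 0 ≤ dsc AV π AC η w i) :
    fRic I AV π AC (η w) w i = 0 := by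
  rw [fRic_split_eta]
  by_cases hi : i ∈ I
  · have hs : Real.sqrt (dsc AV π AC η w i) ^ 2 = dsc AV π AC η w i :=
      Real.sq_sqrt (hd hi)
    have he : η w i = -AV i i - Real.sqrt (dsc AV π AC η w i) := by
      rw [hrec w i, if_pos hi]
    rw [if_pos hi, he]
    simp only [dsc] at hs ⊢
    linear_combination (1 / 2) * hs
  · have he : η w i = -(AV i i)⁻¹ * cfun AV π AC η w i := by rw [hrec w i, if_neg hi]
    have ha : AV i i ≠ 0 := ne_of_lt (hAVdiag i)
    rw [if_neg hi, he]
    field_simp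
    ring

lemma key_min (hAVdiag : ∀ i : Fin m, AV i i < 0)
    (hAVoff : ∀ i k : Fin m, i ≠ k → 0 ≤ AV i k) (hrec : etaRec I AV π AC η)
    (w : Fin n → ℝ) (v : Fin m → ℝ) (hv : v ∈ Eset I AV π AC w) :
    ∀ i : Fin m, (i ∈ I → 0 ≤ dsc AV π AC η w i) ∧ η w i ≤ v i := by
  refine finStrongInd _ ?_
  intro i IH
  have hfv := hv i
  rw [fRic_split] at hfv
  have hmono : cfun AV π AC η w i
      ≤ (∑ k ∈ Finset.univ.filter (fun k => k < i), AV i k * v k) + gfun π AC w i := by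
    unfold cfun
    refine add_le_add (Finset.sum_le_sum fun k hk => ?_) le_rfl
    have hk' : k < i := (Finset.mem_filter.1 hk).2
    exact mul_le_mul_of_nonneg_left ((IH k hk').2) (hAVoff i k (ne_of_gt hk'))
  have h2 : (1 / 2) * (v i) ^ 2 * (if i ∈ I then 1 else 0) + AV i i * v i
      + cfun AV π AC η w i ≤ 0 := by linarith
  by_cases hi : i ∈ I
  · rw [if_pos hi, mul_one] at h2
    have hd : 0 ≤ dsc AV π AC η w i := by
      simp only [dsc]; nlinarith [sq_nonneg (v i + AV i i)]
    have hsq : (v i + AV i i) ^ 2 ≤ dsc AV π AC η w i := by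
      simp only [dsc]; nlinarith
    have h3 : |v i + AV i i| ≤ Real.sqrt (dsc AV π AC η w i) := by
      rw [← Real.sqrt_sq_eq_abs]; exact Real.sqrt_le_sqrt hsq
    have h4 := neg_abs_le (v i + AV i i)
    refine ⟨fun _ => hd, ?_⟩
    rw [hrec w i, if_pos hi]
    linarith
  · rw [if_neg hi, mul_zero, zero_add] at h2
    refine ⟨fun h => absurd h hi, ?_⟩
    rw [hrec w i, if_neg hi]
    have ha := hAVdiag i
    have heq : -(AV i i)⁻¹ * cfun AV π AC η w i = -(cfun AV π AC η w i) / AV i i := by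
      rw [div_eq_mul_inv]; ring
    rw [heq, div_le_iff_of_neg ha]
    nlinarith
  

lemma keyO (hAVdiag : ∀ i : Fin m, AV i i < 0)
    (hAVoff : ∀ i k : Fin m, i ≠ k → 0 ≤ AV i k) (hrec : etaRec I AV π AC η)
    (w : Fin n → ℝ) (v : Fin m → ℝ) (hv : v ∈ EsetO I AV π AC w) :
    ∀ i ∈ I, 0 < dsc AV π AC η w i := by
  intro i hi
  have hvE : v ∈ Eset I AV π AC w := fun j => (hv j).le
  have hkey := key_min hAVdiag hAVoff hrec w v hvE
  have hfv := hv i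
  rw [fRic_split] at hfv
  have hmono : cfun AV π AC η w i
      ≤ (∑ k ∈ Finset.univ.filter (fun k => k < i), AV i k * v k) + gfun π AC w i := by
    unfold cfun
    refine add_le_add (Finset.sum_le_sum fun k hk => ?_) le_rfl
    have hk' : k < i := (Finset.mem_filter.1 hk).2
    exact mul_le_mul_of_nonneg_left ((hkey k).2) (hAVoff i k (ne_of_gt hk'))
  rw [if_pos hi, mul_one] at hfv
  simp only [dsc]
  nlinarith [sq_nonneg (v i + AV i i)]

lemma eta_zero (hAVdiag : ∀ i : Fin m, AV i i < 0) (hrec : etaRec I AV π AC η) :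
    ∀ i : Fin m, η (0 : Fin n → ℝ) i = 0 := by
  refine finStrongInd _ ?_
  intro i IH
  have hg : gfun π AC (0 : Fin n → ℝ) i = 0 := by simp [gfun]
  have hc : cfun AV π AC η (0 : Fin n → ℝ) i = 0 := by
    unfold cfun
    rw [hg, add_zero]
    refine Finset.sum_eq_zero fun k hk => ?_
    rw [IH k (Finset.mem_filter.1 hk).2, mul_zero]
  have ha := hAVdiag i
  rw [hrec 0 i]
  by_cases hi : i ∈ I
  · rw [if_pos hi]
    simp only [dsc, hc, mul_zero, sub_zero]
    rw [Real.sqrt_sq_eq_abs, abs_of_neg ha]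
    ring
  · rw [if_neg hi, hc, mul_zero]

end AuxEta

section AuxEta2

variable {m n : ℕ} {I : Finset (Fin m)} {AV : Matrix (Fin m) (Fin m) ℝ}
  {π : Fin m → Matrix (Fin n) (Fin n) ℝ} {AC : Matrix (Fin m) (Fin n) ℝ}
  {η : (Fin n → ℝ) → Fin m → ℝ}

lemma witnessO (hAVdiag : ∀ i : Fin m, AV i i < 0)
    (hAVoff : ∀ i k : Fin m, i ≠ k → 0 ≤ AV i k) (hrec : etaRec I AV π AC η)
    (w : Fin n → ℝ) (hd : ∀ i ∈ I, 0 < dsc AV π AC η w i) :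
    (EsetO I AV π AC w).Nonempty := by
  classical
  set B : ℝ := (∑ i, ∑ k, |AV i k|) + 1 with hBdef
  have hBsum : (0 : ℝ) ≤ ∑ i : Fin m, ∑ k : Fin m, |AV i k| :=
    Finset.sum_nonneg fun i _ => Finset.sum_nonneg fun k _ => abs_nonneg _
  have hB1 : (1 : ℝ) ≤ B := by simp only [hBdef]; linarith
  have hB0 : (0 : ℝ) < B := by linarith
  have hrow : ∀ i : Fin m,
      (∑ k ∈ Finset.univ.filter (fun k => k < i), AV i k) ≤ B := by
    intro i
    have h1 : (∑ k ∈ Finset.univ.filter (fun k : Fin m => k < i), AV i k)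
        ≤ ∑ k ∈ Finset.univ.filter (fun k : Fin m => k < i), |AV i k| :=
      Finset.sum_le_sum fun k _ => le_abs_self _
    have h2 : (∑ k ∈ Finset.univ.filter (fun k : Fin m => k < i), |AV i k|)
        ≤ ∑ k, |AV i k| :=
      Finset.sum_le_sum_of_subset_of_nonneg (Finset.filter_subset _ _)
        fun k _ _ => abs_nonneg _
    have h3 : (∑ k, |AV i k|) ≤ ∑ i' : Fin m, ∑ k, |AV i' k| :=
      Finset.single_le_sum (f := fun i' : Fin m => ∑ k, |AV i' k|)
        (fun i' _ => Finset.sum_nonneg fun k _ => abs_nonneg _) (Finset.mem_univ i)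
    simp only [hBdef]; linarith
  -- choose ε
  set S : Finset ℝ :=
    insert 1 ((Finset.univ.image (fun i : Fin m => -AV i i / (2 * B)))
      ∪ I.image (fun i => Real.sqrt (dsc AV π AC η w i) / (2 * B))) with hSdef
  have hSne : S.Nonempty := ⟨1, by simp [hSdef]⟩
  set ε : ℝ := S.min' hSne with hεdef
  have hεmem := S.min'_mem hSne
  have hεpos : 0 < ε := by
    have : ∀ x ∈ S, 0 < x := by
      intro x hx
      simp only [hSdef, Finset.mem_insert, Finset.mem_union, Finset.mem_image] at hx
      rcases hx with rfl | ⟨i, _, rfl⟩ | ⟨i, hi, rfl⟩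
      · norm_num
      · exact div_pos (by linarith [hAVdiag i]) (by linarith)
      · exact div_pos (Real.sqrt_pos.2 (hd i hi)) (by linarith)
    exact this _ hεmem
  have hε1 : ε ≤ 1 := S.min'_le 1 (by simp [hSdef])
  have hεa : ∀ i : Fin m, 2 * B * ε ≤ -AV i i := by
    intro i
    have hm : ε ≤ -AV i i / (2 * B) :=
      S.min'_le _ (by simp only [hSdef, Finset.mem_insert, Finset.mem_union,
        Finset.mem_image]; exact Or.inr (Or.inl ⟨i, Finset.mem_univ i, rfl⟩))
    have h2B : (0 : ℝ) < 2 * B := by linarith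
    calc 2 * B * ε ≤ 2 * B * (-AV i i / (2 * B)) :=
          mul_le_mul_of_nonneg_left hm (by linarith)
      _ = -AV i i := by field_simp
  have hεs : ∀ i ∈ I, 2 * B * ε ≤ Real.sqrt (dsc AV π AC η w i) := by
    intro i hi
    have hm : ε ≤ Real.sqrt (dsc AV π AC η w i) / (2 * B) :=
      S.min'_le _ (by simp only [hSdef, Finset.mem_insert, Finset.mem_union,
        Finset.mem_image]; exact Or.inr (Or.inr ⟨i, hi, rfl⟩))
    calc 2 * B * ε ≤ 2 * B * (Real.sqrt (dsc AV π AC η w i) / (2 * B)) :=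
          mul_le_mul_of_nonneg_left hm (by linarith)
      _ = Real.sqrt (dsc AV π AC η w i) := by field_simp
  -- the perturbation
  set δ : Fin m → ℝ := fun i => ε ^ (m - i.val) with hδdef
  have hδpos : ∀ i, 0 < δ i := fun i => pow_pos hεpos _
  have hδle : ∀ i : Fin m, δ i ≤ ε := by
    intro i
    have h1 : 1 ≤ m - i.val := by have := i.isLt; omega
    calc δ i = ε ^ (m - i.val) := rfl
      _ ≤ ε ^ 1 := pow_le_pow_of_le_one hεpos.le hε1 h1
      _ = ε := pow_one ε
  have hδk : ∀ k i : Fin m, k < i → δ k ≤ ε * δ i := by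
    intro k i hk
    have hki : k.val < i.val := hk
    have h1 : m - i.val + 1 ≤ m - k.val := by have := i.isLt; omega
    calc δ k = ε ^ (m - k.val) := rfl
      _ ≤ ε ^ (m - i.val + 1) := pow_le_pow_of_le_one hεpos.le hε1 h1
      _ = ε * ε ^ (m - i.val) := by rw [pow_succ]; ring
      _ = ε * δ i := rfl
  refine ⟨fun i => η w i + δ i, ?_⟩
  intro i
  rw [fRic_split]
  have hsplit : (∑ k ∈ Finset.univ.filter (fun k => k < i), AV i k * (η w k + δ k))
      = (∑ k ∈ Finset.univ.filter (fun k => k < i), AV i k * η w k)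
        + ∑ k ∈ Finset.univ.filter (fun k => k < i), AV i k * δ k := by
    rw [← Finset.sum_add_distrib]
    exact Finset.sum_congr rfl fun k _ => by ring
  set e : ℝ := ∑ k ∈ Finset.univ.filter (fun k => k < i), AV i k * δ k with hedef
  have he0 : 0 ≤ e :=
    Finset.sum_nonneg fun k hk =>
      mul_nonneg (hAVoff i k (ne_of_gt (Finset.mem_filter.1 hk).2)) (hδpos k).le
  have heB : e ≤ B * (ε * δ i) := by
    have h1 : e ≤ ∑ k ∈ Finset.univ.filter (fun k => k < i), AV i k * (ε * δ i) :=
      Finset.sum_le_sum fun k hk =>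
        mul_le_mul_of_nonneg_left (hδk k i (Finset.mem_filter.1 hk).2)
          (hAVoff i k (ne_of_gt (Finset.mem_filter.1 hk).2))
    have h2 : (∑ k ∈ Finset.univ.filter (fun k => k < i), AV i k * (ε * δ i))
        = (∑ k ∈ Finset.univ.filter (fun k => k < i), AV i k) * (ε * δ i) :=
      (Finset.sum_mul _ _ _).symm
    have h3 : (∑ k ∈ Finset.univ.filter (fun k => k < i), AV i k) * (ε * δ i)
        ≤ B * (ε * δ i) :=
      mul_le_mul_of_nonneg_right (hrow i)
        (mul_nonneg hεpos.le (hδpos i).le)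
    linarith
  have hfeta := feta_eq hAVdiag hrec w i (fun hi => (hd i hi).le)
  rw [fRic_split_eta] at hfeta
  have hδi := hδpos i
  have hδiε := hδle i
  have hεδpos : 0 < δ i * ε := mul_pos hδi hεpos
  have hεδB : δ i * ε * 1 ≤ δ i * ε * B :=
    mul_le_mul_of_nonneg_left hB1 hεδpos.le
  by_cases hi : i ∈ I
  · simp only [if_pos hi, mul_one] at hfeta ⊢
    set s : ℝ := Real.sqrt (dsc AV π AC η w i) with hsdef
    have heta : η w i = -AV i i - s := by rw [hrec w i, if_pos hi]
    have hse : 2 * B * ε ≤ s := hεs i hi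
    have h1 : δ i * (2 * B * ε) ≤ δ i * s := mul_le_mul_of_nonneg_left hse hδi.le
    have h2 : δ i * δ i ≤ δ i * ε := mul_le_mul_of_nonneg_left hδiε hδi.le
    rw [hsplit]
    simp only [cfun] at hfeta
    nlinarith [hfeta, heB, h1, h2, hεδB, hεδpos]
  · simp only [if_neg hi, mul_zero] at hfeta ⊢
    have ha : 2 * B * ε ≤ -AV i i := hεa i
    have h1 : δ i * (2 * B * ε) ≤ δ i * (-AV i i) := mul_le_mul_of_nonneg_left ha hδi.le
    rw [hsplit]
    simp only [cfun] at hfeta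
    nlinarith [hfeta, heB, h1, hεδB, hεδpos]

end AuxEta2

section AuxEta3

variable {m n : ℕ} {I : Finset (Fin m)} {AV : Matrix (Fin m) (Fin m) ℝ}
  {π : Fin m → Matrix (Fin n) (Fin n) ℝ} {AC : Matrix (Fin m) (Fin n) ℝ}
  {η : (Fin n → ℝ) → Fin m → ℝ}

lemma gfun_cont (i : Fin m) : Continuous fun w : Fin n → ℝ => gfun π AC w i := by
  unfold gfun
  refine Continuous.add (Continuous.mul continuous_const ?_) ?_
  · exact continuous_finset_sum _ fun j _ => continuous_finset_sum _ fun k _ =>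
      ((continuous_apply j).mul continuous_const).mul (continuous_apply k)
  · exact continuous_finset_sum _ fun j _ => continuous_const.mul (continuous_apply j)

lemma gfun_contDiff (i : Fin m) :
    ContDiff ℝ 2 fun w : Fin n → ℝ => gfun π AC w i := by
  unfold gfun
  refine ContDiff.add (ContDiff.mul contDiff_const ?_) ?_
  · exact ContDiff.sum fun j _ => ContDiff.sum fun k _ =>
      (((contDiff_apply ℝ ℝ j).mul contDiff_const).mul (contDiff_apply ℝ ℝ k))
  · exact ContDiff.sum fun j _ => contDiff_const.mul (contDiff_apply ℝ ℝ j)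

lemma eta_cont (hrec : etaRec I AV π AC η) (i : Fin m) :
    Continuous fun w => η w i := by
  refine finStrongInd (fun i => Continuous fun w => η w i) ?_ i
  intro i IH
  have hfe : (fun w => η w i) = fun w =>
      if i ∈ I then -AV i i - Real.sqrt (dsc AV π AC η w i)
      else -(AV i i)⁻¹ * cfun AV π AC η w i := funext fun w => hrec w i
  rw [hfe]
  have hccont : Continuous fun w => cfun AV π AC η w i := by
    unfold cfun
    exact (continuous_finset_sum _ fun k hk =>
      continuous_const.mul (IH k (Finset.mem_filter.1 hk).2)).add (gfun_cont i)
  by_cases hi : i ∈ I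
  · simp only [if_pos hi]
    refine continuous_const.sub (Real.continuous_sqrt.comp ?_)
    exact continuous_const.sub (continuous_const.mul hccont)
  · simp only [if_neg hi]
    exact continuous_const.mul hccont

lemma dsc_cont (hrec : etaRec I AV π AC η) (i : Fin m) :
    Continuous fun w => dsc AV π AC η w i := by
  unfold dsc cfun
  refine continuous_const.sub (continuous_const.mul ?_)
  exact (continuous_finset_sum _ fun k hk =>
    continuous_const.mul (eta_cont hrec k)).add (gfun_cont i)

lemma eta_contDiffOn (hrec : etaRec I AV π AC η) (i : Fin m) :
    ContDiffOn ℝ 2 (fun w => η w i)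
      {w : Fin n → ℝ | ∀ j ∈ I, 0 < dsc AV π AC η w j} := by
  refine finStrongInd (fun i => ContDiffOn ℝ 2 (fun w => η w i)
    {w : Fin n → ℝ | ∀ j ∈ I, 0 < dsc AV π AC η w j}) ?_ i
  intro i IH
  have hfe : (fun w => η w i) = fun w =>
      if i ∈ I then -AV i i - Real.sqrt (dsc AV π AC η w i)
      else -(AV i i)⁻¹ * cfun AV π AC η w i := funext fun w => hrec w i
  rw [hfe]
  have hccd : ContDiffOn ℝ 2 (fun w => cfun AV π AC η w i)
      {w : Fin n → ℝ | ∀ j ∈ I, 0 < dsc AV π AC η w j} := by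
    unfold cfun
    exact (ContDiffOn.sum fun k hk =>
      contDiffOn_const.mul (IH k (Finset.mem_filter.1 hk).2)).add
      (gfun_contDiff i).contDiffOn
  by_cases hi : i ∈ I
  · simp only [if_pos hi]
    refine contDiffOn_const.sub (ContDiffOn.sqrt ?_ ?_)
    · exact contDiffOn_const.sub (contDiffOn_const.mul hccd)
    · intro w hw
      exact ne_of_gt (hw i hi)
  · simp only [if_neg hi]
    exact contDiffOn_const.mul hccd

lemma gfun_convex (hπ : (π i).PosSemidef) (w1 w2 : Fin n → ℝ) (a b : ℝ)
    (ha : 0 ≤ a) (hb : 0 ≤ b) (hab : a + b = 1) :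
    gfun π AC (fun j => a * w1 j + b * w2 j) i
      ≤ a * gfun π AC w1 i + b * gfun π AC w2 i := by
  unfold gfun
  have hq := quad_convex (π i) hπ w1 w2 a b ha hb hab
  have hl : (∑ j, AC i j * (a * w1 j + b * w2 j))
      = a * (∑ j, AC i j * w1 j) + b * (∑ j, AC i j * w2 j) := by
    simp only [Finset.mul_sum, ← Finset.sum_add_distrib]
    exact Finset.sum_congr rfl fun j _ => by ring
  rw [hl]
  linarith

lemma fRic_convex (hπ : ∀ i, (π i).PosSemidef) (v1 v2 : Fin m → ℝ)
    (w1 w2 : Fin n → ℝ) (a b : ℝ) (ha : 0 ≤ a) (hb : 0 ≤ b) (hab : a + b = 1)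
    (i : Fin m) :
    fRic I AV π AC (fun j => a * v1 j + b * v2 j) (fun j => a * w1 j + b * w2 j) i
      ≤ a * fRic I AV π AC v1 w1 i + b * fRic I AV π AC v2 w2 i := by
  unfold fRic
  have hg := gfun_convex (AC := AC) (hπ i) w1 w2 a b ha hb hab
  have hl : (∑ k ∈ Finset.univ.filter (fun k => k ≤ i), AV i k * (a * v1 k + b * v2 k))
      = a * (∑ k ∈ Finset.univ.filter (fun k => k ≤ i), AV i k * v1 k)
        + b * (∑ k ∈ Finset.univ.filter (fun k => k ≤ i), AV i k * v2 k) := by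
    simp only [Finset.mul_sum, ← Finset.sum_add_distrib]
    exact Finset.sum_congr rfl fun k _ => by ring
  have hsq : (1 / 2) * (a * v1 i + b * v2 i) ^ 2 * (if i ∈ I then 1 else 0)
      ≤ a * ((1 / 2) * (v1 i) ^ 2 * (if i ∈ I then 1 else 0))
        + b * ((1 / 2) * (v2 i) ^ 2 * (if i ∈ I then 1 else 0)) := by
    by_cases hi : i ∈ I
    · simp only [if_pos hi, mul_one]
      have hb' : b = 1 - a := by linarith
      have key : a * ((1 / 2) * (v1 i) ^ 2) + b * ((1 / 2) * (v2 i) ^ 2)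
          - (1 / 2) * (a * v1 i + b * v2 i) ^ 2
          = (1 / 2) * (a * b) * (v1 i - v2 i) ^ 2 := by rw [hb']; ring
      nlinarith [mul_nonneg (mul_nonneg ha hb) (sq_nonneg (v1 i - v2 i))]
    · simp only [if_neg hi, mul_zero]; linarith
  linarith
end AuxEta3

/-- `𝔇` is a nonempty closed convex subset of `Ker A^D` containing `0`,
`𝔇°` is a convex subset of `Ker A^D`, open in `Ker A^D`, containing `0`;
`η` is (componentwise) convex on `𝔇`, continuous on `𝔇`, and `C²` on `𝔇°`. -/
theorem stmt1 (m n : ℕ) (hm : 1 ≤ m)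
    (I : Finset (Fin m)) (hI : I.Nonempty)
    (AV : Matrix (Fin m) (Fin m) ℝ)
    (hAVtri : ∀ i k : Fin m, i < k → AV i k = 0)
    (hAVdiag : ∀ i : Fin m, AV i i < 0)
    (hAVoff : ∀ i k : Fin m, i ≠ k → 0 ≤ AV i k)
    (π : Fin m → Matrix (Fin n) (Fin n) ℝ)
    (hπ : ∀ i, (π i).PosSemidef)
    (AC : Matrix (Fin m) (Fin n) ℝ) (AD : Matrix (Fin n) (Fin n) ℝ)
    (η : (Fin n → ℝ) → Fin m → ℝ)
    (hη : ∀ (w : Fin n → ℝ) (i : Fin m), η w i =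
      if i ∈ I then
        -AV i i - Real.sqrt ((AV i i) ^ 2 -
          2 * ((∑ k ∈ Finset.univ.filter (fun k => k < i), AV i k * η w k) + gfun π AC w i))
      else
        -(AV i i)⁻¹ *
          ((∑ k ∈ Finset.univ.filter (fun k => k < i), AV i k * η w k) + gfun π AC w i)) :
    (Dset I AV π AC AD).Nonempty
    ∧ (0 : Fin n → ℝ) ∈ Dset I AV π AC AD
    ∧ IsClosed (Dset I AV π AC AD)
    ∧ Convex ℝ (Dset I AV π AC AD)
    ∧ Dset I AV π AC AD ⊆ {w | AD.mulVec w = 0}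
    ∧ (0 : Fin n → ℝ) ∈ DsetO I AV π AC AD
    ∧ Convex ℝ (DsetO I AV π AC AD)
    ∧ DsetO I AV π AC AD ⊆ {w | AD.mulVec w = 0}
    ∧ IsOpen ((Subtype.val : {w : Fin n → ℝ // AD.mulVec w = 0} → (Fin n → ℝ)) ⁻¹'
        DsetO I AV π AC AD)
    ∧ (∀ i : Fin m, ConvexOn ℝ (Dset I AV π AC AD) (fun w => η w i))
    ∧ ContinuousOn η (Dset I AV π AC AD)
    ∧ ContDiffOn ℝ 2 η (DsetO I AV π AC AD) := by
  classical
  have hrec : etaRec I AV π AC η := hη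
  have hkey := key_min (I := I) hAVdiag hAVoff hrec
  -- 0 ∈ Dset
  have h0E : (0 : Fin m → ℝ) ∈ Eset I AV π AC 0 := by
    intro i; simp [fRic, gfun]
  have h0D : (0 : Fin n → ℝ) ∈ Dset I AV π AC AD :=
    ⟨by simp, ⟨0, h0E⟩⟩
  -- kernel is closed
  have hker_cont : Continuous fun w : Fin n → ℝ => AD.mulVec w :=
    LinearMap.continuous_of_finiteDimensional (Matrix.mulVecLin AD)
  have hker_closed : IsClosed {w : Fin n → ℝ | AD.mulVec w = 0} :=
    isClosed_eq hker_cont continuous_const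
  -- characterization of Dset
  have hDeq : Dset I AV π AC AD
      = {w | AD.mulVec w = 0} ∩ ⋂ i ∈ I, {w | 0 ≤ dsc AV π AC η w i} := by
    ext w
    simp only [Dset, Set.mem_setOf_eq, Set.mem_inter_iff, Set.mem_iInter]
    constructor
    · rintro ⟨h1, v, hv⟩
      exact ⟨h1, fun i hi => (hkey w v hv i).1 hi⟩
    · rintro ⟨h1, h2⟩
      exact ⟨h1, ⟨η w, fun i => le_of_eq (feta_eq hAVdiag hrec w i (h2 i))⟩⟩
  have hDclosed : IsClosed (Dset I AV π AC AD) := by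
    rw [hDeq]
    exact hker_closed.inter (isClosed_biInter fun i _ =>
      isClosed_le continuous_const (dsc_cont hrec i))
  -- convex combinations pointwise
  have hcomb : ∀ (p : ℕ) (a b : ℝ) (x y : Fin p → ℝ),
      a • x + b • y = fun j => a * x j + b * y j := by
    intro p a b x y; funext j; simp
  -- convexity of Dset
  have hDconv : Convex ℝ (Dset I AV π AC AD) := by
    intro w1 h1 w2 h2 a b ha hb hab
    obtain ⟨v1, hv1⟩ := h1.2
    obtain ⟨v2, hv2⟩ := h2.2
    refine ⟨?_, ⟨fun j => a * v1 j + b * v2 j, ?_⟩⟩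
    · simp [Matrix.mulVec_add, Matrix.mulVec_smul, h1.1, h2.1]
    · intro i
      have hc := fRic_convex (I := I) (AV := AV) (AC := AC) hπ v1 v2 w1 w2 a b ha hb hab i
      rw [hcomb n a b w1 w2]
      have t1 : a * fRic I AV π AC v1 w1 i ≤ 0 := by
        nlinarith [mul_nonneg ha (neg_nonneg.2 (hv1 i))]
      have t2 : b * fRic I AV π AC v2 w2 i ≤ 0 := by
        nlinarith [mul_nonneg hb (neg_nonneg.2 (hv2 i))]
      linarith
  -- 0 ∈ DsetO
  have hdsc0 : ∀ i ∈ I, 0 < dsc AV π AC η (0 : Fin n → ℝ) i := by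
    intro i _
    have hc : cfun AV π AC η (0 : Fin n → ℝ) i = 0 := by
      unfold cfun
      rw [show gfun π AC (0 : Fin n → ℝ) i = 0 from by simp [gfun], add_zero]
      exact Finset.sum_eq_zero fun k _ => by rw [eta_zero hAVdiag hrec k, mul_zero]
    simp only [dsc, hc, mul_zero, sub_zero]
    nlinarith [hAVdiag i]
  have h0DO : (0 : Fin n → ℝ) ∈ DsetO I AV π AC AD :=
    ⟨by simp, witnessO hAVdiag hAVoff hrec 0 hdsc0⟩
  -- convexity of DsetO
  have hDOconv : Convex ℝ (DsetO I AV π AC AD) := by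
    intro w1 h1 w2 h2 a b ha hb hab
    rcases eq_or_lt_of_le ha with haz | ha'
    · have hb1 : b = 1 := by linarith
      rw [← haz, hb1]; simpa using h2
    rcases eq_or_lt_of_le hb with hbz | hb'
    · have ha1 : a = 1 := by linarith
      rw [← hbz, ha1]; simpa using h1
    obtain ⟨v1, hv1⟩ := h1.2
    obtain ⟨v2, hv2⟩ := h2.2
    refine ⟨?_, ⟨fun j => a * v1 j + b * v2 j, ?_⟩⟩
    · simp [Matrix.mulVec_add, Matrix.mulVec_smul, h1.1, h2.1]
    · intro i
      have hc := fRic_convex (I := I) (AV := AV) (AC := AC) hπ v1 v2 w1 w2 a b ha hb hab i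
      rw [hcomb n a b w1 w2]
      have t1 : a * fRic I AV π AC v1 w1 i < 0 := mul_neg_of_pos_of_neg ha' (hv1 i)
      have t2 : b * fRic I AV π AC v2 w2 i < 0 := mul_neg_of_pos_of_neg hb' (hv2 i)
      have : fRic I AV π AC (fun j => a * v1 j + b * v2 j)
          (fun j => a * w1 j + b * w2 j) i < 0 := by linarith
      exact this
  -- openness in the subspace
  have hDOiff : ∀ w : Fin n → ℝ, AD.mulVec w = 0 →
      (w ∈ DsetO I AV π AC AD ↔ ∀ i ∈ I, 0 < dsc AV π AC η w i) := by
    intro w hw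
    constructor
    · rintro ⟨_, v, hv⟩ i hi
      exact keyO hAVdiag hAVoff hrec w v hv i hi
    · intro h
      exact ⟨hw, witnessO hAVdiag hAVoff hrec w h⟩
  have hUopen : IsOpen {w : Fin n → ℝ | ∀ i ∈ I, 0 < dsc AV π AC η w i} := by
    have hU : {w : Fin n → ℝ | ∀ i ∈ I, 0 < dsc AV π AC η w i}
        = ⋂ i ∈ I, {w | 0 < dsc AV π AC η w i} := by
      ext w; simp
    rw [hU]
    exact isOpen_biInter_finset fun i _ =>
      isOpen_lt continuous_const (dsc_cont hrec i)
  have hopen : IsOpen ((Subtype.val : {w : Fin n → ℝ // AD.mulVec w = 0} → (Fin n → ℝ)) ⁻¹'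
      DsetO I AV π AC AD) := by
    have hpre : ((Subtype.val : {w : Fin n → ℝ // AD.mulVec w = 0} → (Fin n → ℝ)) ⁻¹'
        DsetO I AV π AC AD)
        = Subtype.val ⁻¹' {w : Fin n → ℝ | ∀ i ∈ I, 0 < dsc AV π AC η w i} := by
      ext ⟨w, hw⟩
      simp only [Set.mem_preimage]
      exact hDOiff w hw
    rw [hpre]
    exact hUopen.preimage continuous_subtype_val
  -- convexity of η components
  have hconvOn : ∀ i : Fin m, ConvexOn ℝ (Dset I AV π AC AD) (fun w => η w i) := by
    intro i
    refine ⟨hDconv, ?_⟩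
    intro w1 h1 w2 h2 a b ha hb hab
    obtain ⟨v1, hv1⟩ := h1.2
    obtain ⟨v2, hv2⟩ := h2.2
    have hf1 : ∀ j, fRic I AV π AC (η w1) w1 j = 0 :=
      fun j => feta_eq hAVdiag hrec w1 j (fun hj => (hkey w1 v1 hv1 j).1 hj)
    have hf2 : ∀ j, fRic I AV π AC (η w2) w2 j = 0 :=
      fun j => feta_eq hAVdiag hrec w2 j (fun hj => (hkey w2 v2 hv2 j).1 hj)
    have hvE : (fun j => a * η w1 j + b * η w2 j) ∈ Eset I AV π AC (a • w1 + b • w2) := by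
      intro j
      have hc := fRic_convex (I := I) (AV := AV) (AC := AC) hπ (η w1) (η w2) w1 w2 a b ha hb hab j
      rw [hf1 j, hf2 j] at hc
      show fRic I AV π AC (fun j => a * η w1 j + b * η w2 j) (a • w1 + b • w2) j ≤ 0
      rw [hcomb n a b w1 w2]
      linarith
    have hle := (hkey (a • w1 + b • w2) _ hvE i).2
    simpa [smul_eq_mul] using hle
  -- continuity
  have hcont : Continuous η := continuous_pi fun i => eta_cont hrec i
  -- smoothness
  have hsub : DsetO I AV π AC AD ⊆ {w | ∀ j ∈ I, 0 < dsc AV π AC η w j} := by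
    rintro w ⟨_, v, hv⟩ j hj
    exact keyO hAVdiag hAVoff hrec w v hv j hj
  have hcd : ContDiffOn ℝ 2 η (DsetO I AV π AC AD) :=
    (contDiffOn_pi.2 fun i => eta_contDiffOn hrec i).mono hsub
  exact ⟨⟨0, h0D⟩, h0D, hDclosed, hDconv, fun w hw => hw.1, h0DO, hDOconv,
    fun w hw => hw.1, hopen, hconvOn, hcont.continuousOn, hcd⟩

end
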